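/- Let φ¹ : D_E¹ ⊗ D_V¹ → D_E¹ ⊗ D_V¹ and φ² : D_E² ⊗ D_V² → D_E² ⊗ D_V² be K-linear maps, and let λ, μ ∈ K. Define the K-linear endomorphism Φ = φ¹ ⊕_{λ,μ} φ² of (D_E¹ ⊕ D_E²) ⊗ (D_V¹ ⊕ D_V²) by: Φ(a₁ ⊗ b₁) = φ¹(a₁ ⊗ b₁), Φ(a₂ ⊗ b₂) = φ²(a₂ ⊗ b₂), Φ(a₁ ⊗ b₂) = λ·(a₁ ⊗ b₂), and Φ(a₂ ⊗ b₁) = μ·(a₂ ⊗ b₁), for all a_i ∈ D_E^i and b_i ∈ D_V^i (i = 1, 2), the inclusions into the direct sums being understood. Then Φ is tree-compatible (with edge space D_E¹ ⊕ D_E² and vertex space D_V¹ ⊕ D_V²) if, and only if, both φ¹ and φ² are tree-compatible. -/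

import Mathlib

open TensorProduct

/-- The endomorphism `φ₁₃ = (τ ⊗ id) ∘ (id ⊗ φ) ∘ (τ ⊗ id)` of `D_E ⊗ D_E ⊗ D_V`,
where `τ` is the flip of the first two factors. -/
noncomputable def phi13 (K : Type*) [CommSemiring K] (E V : Type*)
    [AddCommMonoid E] [Module K E] [AddCommMonoid V] [Module K V]
    (φ : TensorProduct K E V →ₗ[K] TensorProduct K E V) :
    TensorProduct K E (TensorProduct K E V) →ₗ[K] TensorProduct K E (TensorProduct K E V) :=
  (TensorProduct.leftComm K E E V).toLinearMap ∘ₗ LinearMap.lTensor E φ ∘ₗ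
    (TensorProduct.leftComm K E E V).toLinearMap

/-- `φ` is tree-compatible if `φ₁₃ ∘ φ₂₃ = φ₂₃ ∘ φ₁₃`, where `φ₂₃ = id ⊗ φ`. -/
noncomputable def TreeCompatible (K : Type*) [CommSemiring K] (E V : Type*)
    [AddCommMonoid E] [Module K E] [AddCommMonoid V] [Module K V]
    (φ : TensorProduct K E V →ₗ[K] TensorProduct K E V) : Prop :=
  phi13 K E V φ ∘ₗ LinearMap.lTensor E φ = LinearMap.lTensor E φ ∘ₗ phi13 K E V φ
section Aux
variable {K : Type*} [CommSemiring K]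
variable {A B C X Y M N P M' N' P' : Type*}
  [AddCommMonoid A] [Module K A] [AddCommMonoid B] [Module K B]
  [AddCommMonoid C] [Module K C] [AddCommMonoid X] [Module K X]
  [AddCommMonoid Y] [Module K Y]
  [AddCommMonoid M] [Module K M] [AddCommMonoid N] [Module K N]
  [AddCommMonoid P] [Module K P] [AddCommMonoid M'] [Module K M']
  [AddCommMonoid N'] [Module K N'] [AddCommMonoid P'] [Module K P']

lemma leftComm_comp_map (f : M →ₗ[K] M') (g : N →ₗ[K] N') (h : P →ₗ[K] P') :
    (TensorProduct.leftComm K M' N' P').toLinearMap ∘ₗ TensorProduct.map f (TensorProduct.map g h)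
      = TensorProduct.map g (TensorProduct.map f h) ∘ₗ (TensorProduct.leftComm K M N P).toLinearMap := by
  ext m n p
  simp [leftComm_tmul]

lemma lTensor_comp_map (φ : N' →ₗ[K] P') (f : M →ₗ[K] M') (g : N →ₗ[K] N') :
    LinearMap.lTensor M' φ ∘ₗ TensorProduct.map f g = TensorProduct.map f (φ ∘ₗ g) := by
  ext m n
  simp

lemma map_comp_lTensor (f : M →ₗ[K] M') (g : N' →ₗ[K] P') (g' : N →ₗ[K] N') :
    TensorProduct.map f (g ∘ₗ g') = TensorProduct.map f g ∘ₗ LinearMap.lTensor M g' := by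
  ext m n
  simp

lemma map_smul_right' (f : M →ₗ[K] M') (g : N →ₗ[K] N') (c : K) :
    TensorProduct.map f (c • g) = c • TensorProduct.map f g := by
  ext m n
  simp

variable (Φ : TensorProduct K X Y →ₗ[K] TensorProduct K X Y)
  (ιA : A →ₗ[K] X) (ιB : B →ₗ[K] X) (ιC : C →ₗ[K] Y)

lemma gen3 :
    LinearMap.lTensor X Φ ∘ₗ TensorProduct.map ιA (TensorProduct.map ιB ιC)
      = TensorProduct.map ιA (Φ ∘ₗ TensorProduct.map ιB ιC) :=
  lTensor_comp_map Φ ιA (TensorProduct.map ιB ιC)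

/-- diagonal block for `phi13`. -/
lemma leftComm_comp_leftComm :
    (TensorProduct.leftComm K B A C).toLinearMap ∘ₗ (TensorProduct.leftComm K A B C).toLinearMap
      = LinearMap.id := by
  ext a b c
  simp [leftComm_tmul]

/-- diagonal block for `phi13`. -/
lemma gen1 (φ : TensorProduct K A C →ₗ[K] TensorProduct K A C)
    (h : Φ ∘ₗ TensorProduct.map ιA ιC = TensorProduct.map ιA ιC ∘ₗ φ) :
    phi13 K X Y Φ ∘ₗ TensorProduct.map ιA (TensorProduct.map ιB ιC)
      = TensorProduct.map ιA (TensorProduct.map ιB ιC) ∘ₗ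
        ((TensorProduct.leftComm K B A C).toLinearMap ∘ₗ LinearMap.lTensor B φ ∘ₗ
          (TensorProduct.leftComm K A B C).toLinearMap) := by
  rw [phi13]
  simp only [LinearMap.comp_assoc]
  rw [leftComm_comp_map ιA ιB ιC]
  rw [← LinearMap.comp_assoc (TensorProduct.leftComm K A B C).toLinearMap
      (TensorProduct.map ιB (TensorProduct.map ιA ιC)) (LinearMap.lTensor X Φ),
    lTensor_comp_map, h, map_comp_lTensor]
  conv_lhs => rw [← LinearMap.comp_assoc, ← LinearMap.comp_assoc,
    leftComm_comp_map ιB ιA ιC]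
  simp only [LinearMap.comp_assoc]

/-- off-diagonal (scalar) block for `phi13`. -/
lemma gen2 (c : K) (h : Φ ∘ₗ TensorProduct.map ιA ιC = c • TensorProduct.map ιA ιC) :
    phi13 K X Y Φ ∘ₗ TensorProduct.map ιA (TensorProduct.map ιB ιC)
      = c • TensorProduct.map ιA (TensorProduct.map ιB ιC) := by
  rw [phi13]
  simp only [LinearMap.comp_assoc]
  rw [leftComm_comp_map ιA ιB ιC,
    ← LinearMap.comp_assoc (TensorProduct.leftComm K A B C).toLinearMap
      (TensorProduct.map ιB (TensorProduct.map ιA ιC)) (LinearMap.lTensor X Φ),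
    lTensor_comp_map, h, map_smul_right']
  simp only [LinearMap.smul_comp, LinearMap.comp_smul]
  congr 1
  rw [← LinearMap.comp_assoc, leftComm_comp_map ιB ιA ιC, LinearMap.comp_assoc,
    leftComm_comp_leftComm, LinearMap.comp_id]

end Aux

section Cases
variable {K : Type*} [CommSemiring K]

lemma comm_conj {W Z : Type*} [AddCommMonoid W] [Module K W] [AddCommMonoid Z] [Module K Z]
    (F G : Z →ₗ[K] Z) (J : W →ₗ[K] Z) (p q : W →ₗ[K] W)
    (h2 : F ∘ₗ J = J ∘ₗ p) (h1 : G ∘ₗ J = J ∘ₗ q) (hpq : p ∘ₗ q = q ∘ₗ p) :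
    (F ∘ₗ G) ∘ₗ J = (G ∘ₗ F) ∘ₗ J := by
  calc (F ∘ₗ G) ∘ₗ J = F ∘ₗ (G ∘ₗ J) := by rw [LinearMap.comp_assoc]
    _ = (F ∘ₗ J) ∘ₗ q := by rw [h1, LinearMap.comp_assoc]
    _ = J ∘ₗ (p ∘ₗ q) := by rw [h2, LinearMap.comp_assoc]
    _ = J ∘ₗ (q ∘ₗ p) := by rw [hpq]
    _ = (G ∘ₗ J) ∘ₗ p := by rw [h1, LinearMap.comp_assoc]
    _ = G ∘ₗ (F ∘ₗ J) := by rw [h2, LinearMap.comp_assoc]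
    _ = (G ∘ₗ F) ∘ₗ J := by rw [LinearMap.comp_assoc]

variable {A B C X Y : Type*}
  [AddCommMonoid A] [Module K A] [AddCommMonoid B] [Module K B]
  [AddCommMonoid C] [Module K C] [AddCommMonoid X] [Module K X]
  [AddCommMonoid Y] [Module K Y]
variable (Φ : TensorProduct K X Y →ₗ[K] TensorProduct K X Y)
  (ιA : A →ₗ[K] X) (ιB : B →ₗ[K] X) (ιC : C →ₗ[K] Y)

/-- `lTensor` block, diagonal case. -/
lemma lT_diag (φB : TensorProduct K B C →ₗ[K] TensorProduct K B C)
    (hBC : Φ ∘ₗ TensorProduct.map ιB ιC = TensorProduct.map ιB ιC ∘ₗ φB) :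
    LinearMap.lTensor X Φ ∘ₗ TensorProduct.map ιA (TensorProduct.map ιB ιC)
      = TensorProduct.map ιA (TensorProduct.map ιB ιC) ∘ₗ LinearMap.lTensor A φB := by
  rw [gen3, hBC, map_comp_lTensor]

/-- `lTensor` block, scalar case. -/
lemma lT_scalar (c : K)
    (hBC : Φ ∘ₗ TensorProduct.map ιB ιC = c • TensorProduct.map ιB ιC) :
    LinearMap.lTensor X Φ ∘ₗ TensorProduct.map ιA (TensorProduct.map ιB ιC)
      = TensorProduct.map ιA (TensorProduct.map ιB ιC) ∘ₗ (c • LinearMap.id) := by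
  rw [gen3, hBC, map_smul_right', LinearMap.comp_smul, LinearMap.comp_id]

/-- `phi13` block, diagonal case, as composition with an endomorphism. -/
lemma p13_diag (φA : TensorProduct K A C →ₗ[K] TensorProduct K A C)
    (hAC : Φ ∘ₗ TensorProduct.map ιA ιC = TensorProduct.map ιA ιC ∘ₗ φA) :
    phi13 K X Y Φ ∘ₗ TensorProduct.map ιA (TensorProduct.map ιB ιC)
      = TensorProduct.map ιA (TensorProduct.map ιB ιC) ∘ₗ
        ((TensorProduct.leftComm K B A C).toLinearMap ∘ₗ LinearMap.lTensor B φA ∘ₗ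
          (TensorProduct.leftComm K A B C).toLinearMap) :=
  gen1 Φ ιA ιB ιC φA hAC

/-- `phi13` block, scalar case. -/
lemma p13_scalar (c : K)
    (hAC : Φ ∘ₗ TensorProduct.map ιA ιC = c • TensorProduct.map ιA ιC) :
    phi13 K X Y Φ ∘ₗ TensorProduct.map ιA (TensorProduct.map ιB ιC)
      = TensorProduct.map ιA (TensorProduct.map ιB ιC) ∘ₗ (c • LinearMap.id) := by
  rw [gen2 Φ ιA ιB ιC c hAC, LinearMap.comp_smul, LinearMap.comp_id]

lemma smul_id_comm {W : Type*} [AddCommMonoid W] [Module K W] (c : K) (q : W →ₗ[K] W) :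
    (c • LinearMap.id) ∘ₗ q = q ∘ₗ (c • LinearMap.id) := by
  rw [LinearMap.smul_comp, LinearMap.comp_smul, LinearMap.id_comp, LinearMap.comp_id]

end Cases

section Glue
variable {K : Type*} [CommSemiring K]
variable {X₁ X₂ Y₁ Y₂ : Type*}
  [AddCommMonoid X₁] [Module K X₁] [AddCommMonoid X₂] [Module K X₂]
  [AddCommMonoid Y₁] [Module K Y₁] [AddCommMonoid Y₂] [Module K Y₂]

lemma glue
    (F G : TensorProduct K (X₁ × X₂) (TensorProduct K (X₁ × X₂) (Y₁ × Y₂)) →ₗ[K]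
      TensorProduct K (X₁ × X₂) (TensorProduct K (X₁ × X₂) (Y₁ × Y₂)))
    (h111 : F ∘ₗ TensorProduct.map (LinearMap.inl K X₁ X₂)
        (TensorProduct.map (LinearMap.inl K X₁ X₂) (LinearMap.inl K Y₁ Y₂))
      = G ∘ₗ TensorProduct.map (LinearMap.inl K X₁ X₂)
        (TensorProduct.map (LinearMap.inl K X₁ X₂) (LinearMap.inl K Y₁ Y₂)))
    (h112 : F ∘ₗ TensorProduct.map (LinearMap.inl K X₁ X₂)
        (TensorProduct.map (LinearMap.inl K X₁ X₂) (LinearMap.inr K Y₁ Y₂))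
      = G ∘ₗ TensorProduct.map (LinearMap.inl K X₁ X₂)
        (TensorProduct.map (LinearMap.inl K X₁ X₂) (LinearMap.inr K Y₁ Y₂)))
    (h121 : F ∘ₗ TensorProduct.map (LinearMap.inl K X₁ X₂)
        (TensorProduct.map (LinearMap.inr K X₁ X₂) (LinearMap.inl K Y₁ Y₂))
      = G ∘ₗ TensorProduct.map (LinearMap.inl K X₁ X₂)
        (TensorProduct.map (LinearMap.inr K X₁ X₂) (LinearMap.inl K Y₁ Y₂)))
    (h122 : F ∘ₗ TensorProduct.map (LinearMap.inl K X₁ X₂)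
        (TensorProduct.map (LinearMap.inr K X₁ X₂) (LinearMap.inr K Y₁ Y₂))
      = G ∘ₗ TensorProduct.map (LinearMap.inl K X₁ X₂)
        (TensorProduct.map (LinearMap.inr K X₁ X₂) (LinearMap.inr K Y₁ Y₂)))
    (h211 : F ∘ₗ TensorProduct.map (LinearMap.inr K X₁ X₂)
        (TensorProduct.map (LinearMap.inl K X₁ X₂) (LinearMap.inl K Y₁ Y₂))
      = G ∘ₗ TensorProduct.map (LinearMap.inr K X₁ X₂)
        (TensorProduct.map (LinearMap.inl K X₁ X₂) (LinearMap.inl K Y₁ Y₂)))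
    (h212 : F ∘ₗ TensorProduct.map (LinearMap.inr K X₁ X₂)
        (TensorProduct.map (LinearMap.inl K X₁ X₂) (LinearMap.inr K Y₁ Y₂))
      = G ∘ₗ TensorProduct.map (LinearMap.inr K X₁ X₂)
        (TensorProduct.map (LinearMap.inl K X₁ X₂) (LinearMap.inr K Y₁ Y₂)))
    (h221 : F ∘ₗ TensorProduct.map (LinearMap.inr K X₁ X₂)
        (TensorProduct.map (LinearMap.inr K X₁ X₂) (LinearMap.inl K Y₁ Y₂))
      = G ∘ₗ TensorProduct.map (LinearMap.inr K X₁ X₂)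
        (TensorProduct.map (LinearMap.inr K X₁ X₂) (LinearMap.inl K Y₁ Y₂)))
    (h222 : F ∘ₗ TensorProduct.map (LinearMap.inr K X₁ X₂)
        (TensorProduct.map (LinearMap.inr K X₁ X₂) (LinearMap.inr K Y₁ Y₂))
      = G ∘ₗ TensorProduct.map (LinearMap.inr K X₁ X₂)
        (TensorProduct.map (LinearMap.inr K X₁ X₂) (LinearMap.inr K Y₁ Y₂))) :
    F = G := by
  apply TensorProduct.ext'
  intro a t
  induction t using TensorProduct.induction_on with
  | zero => simp
  | add t1 t2 ht1 ht2 => simp only [tmul_add, map_add, ht1, ht2]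
  | tmul b c =>
    have ha : a = LinearMap.inl K X₁ X₂ a.1 + LinearMap.inr K X₁ X₂ a.2 := by
      obtain ⟨a1, a2⟩ := a; simp [Prod.ext_iff]
    have hb : b = LinearMap.inl K X₁ X₂ b.1 + LinearMap.inr K X₁ X₂ b.2 := by
      obtain ⟨b1, b2⟩ := b; simp [Prod.ext_iff]
    have hc : c = LinearMap.inl K Y₁ Y₂ c.1 + LinearMap.inr K Y₁ Y₂ c.2 := by
      obtain ⟨c1, c2⟩ := c; simp [Prod.ext_iff]
    have e111 := LinearMap.congr_fun h111 (a.1 ⊗ₜ[K] (b.1 ⊗ₜ[K] c.1))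
    have e112 := LinearMap.congr_fun h112 (a.1 ⊗ₜ[K] (b.1 ⊗ₜ[K] c.2))
    have e121 := LinearMap.congr_fun h121 (a.1 ⊗ₜ[K] (b.2 ⊗ₜ[K] c.1))
    have e122 := LinearMap.congr_fun h122 (a.1 ⊗ₜ[K] (b.2 ⊗ₜ[K] c.2))
    have e211 := LinearMap.congr_fun h211 (a.2 ⊗ₜ[K] (b.1 ⊗ₜ[K] c.1))
    have e212 := LinearMap.congr_fun h212 (a.2 ⊗ₜ[K] (b.1 ⊗ₜ[K] c.2))
    have e221 := LinearMap.congr_fun h221 (a.2 ⊗ₜ[K] (b.2 ⊗ₜ[K] c.1))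
    have e222 := LinearMap.congr_fun h222 (a.2 ⊗ₜ[K] (b.2 ⊗ₜ[K] c.2))
    simp only [LinearMap.comp_apply, TensorProduct.map_tmul] at e111 e112 e121 e122 e211 e212 e221 e222
    rw [ha, hb, hc]
    simp only [add_tmul, tmul_add, map_add]
    rw [e111, e112, e121, e122, e211, e212, e221, e222]

end Glue

section Restrict
variable {K : Type*} [CommSemiring K]
variable {A C X Y : Type*}
  [AddCommMonoid A] [Module K A] [AddCommMonoid C] [Module K C]
  [AddCommMonoid X] [Module K X] [AddCommMonoid Y] [Module K Y]

lemma restrict (Φ : TensorProduct K X Y →ₗ[K] TensorProduct K X Y)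
    (ιA : A →ₗ[K] X) (ιC : C →ₗ[K] Y) (ρA : X →ₗ[K] A) (ρC : Y →ₗ[K] C)
    (hρA : ρA ∘ₗ ιA = LinearMap.id) (hρC : ρC ∘ₗ ιC = LinearMap.id)
    (φ : TensorProduct K A C →ₗ[K] TensorProduct K A C)
    (hAC : Φ ∘ₗ TensorProduct.map ιA ιC = TensorProduct.map ιA ιC ∘ₗ φ)
    (H : TreeCompatible K X Y Φ) : TreeCompatible K A C φ := by
  set J := TensorProduct.map ιA (TensorProduct.map ιA ιC) with hJ
  set R := TensorProduct.map ρA (TensorProduct.map ρA ρC) with hR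
  have hRJ : R ∘ₗ J = LinearMap.id := by
    rw [hR, hJ, ← TensorProduct.map_comp, ← TensorProduct.map_comp, hρA, hρC,
      TensorProduct.map_id, TensorProduct.map_id]
  have h1 : LinearMap.lTensor X Φ ∘ₗ J = J ∘ₗ LinearMap.lTensor A φ :=
    lT_diag Φ ιA ιA ιC φ hAC
  have h2 : phi13 K X Y Φ ∘ₗ J = J ∘ₗ phi13 K A C φ := gen1 Φ ιA ιA ιC φ hAC
  have key : J ∘ₗ (phi13 K A C φ ∘ₗ LinearMap.lTensor A φ)
      = J ∘ₗ (LinearMap.lTensor A φ ∘ₗ phi13 K A C φ) := by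
    calc J ∘ₗ (phi13 K A C φ ∘ₗ LinearMap.lTensor A φ)
        = (J ∘ₗ phi13 K A C φ) ∘ₗ LinearMap.lTensor A φ := by rw [LinearMap.comp_assoc]
      _ = phi13 K X Y Φ ∘ₗ (J ∘ₗ LinearMap.lTensor A φ) := by
          rw [← h2, LinearMap.comp_assoc]
      _ = phi13 K X Y Φ ∘ₗ (LinearMap.lTensor X Φ ∘ₗ J) := by rw [h1]
      _ = (phi13 K X Y Φ ∘ₗ LinearMap.lTensor X Φ) ∘ₗ J := by rw [LinearMap.comp_assoc]
      _ = (LinearMap.lTensor X Φ ∘ₗ phi13 K X Y Φ) ∘ₗ J := by rw [H]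
      _ = LinearMap.lTensor X Φ ∘ₗ (J ∘ₗ phi13 K A C φ) := by
          rw [LinearMap.comp_assoc, h2]
      _ = (LinearMap.lTensor X Φ ∘ₗ J) ∘ₗ phi13 K A C φ := by rw [LinearMap.comp_assoc]
      _ = J ∘ₗ (LinearMap.lTensor A φ ∘ₗ phi13 K A C φ) := by
          rw [h1, LinearMap.comp_assoc]
  have := congrArg (fun f => R ∘ₗ f) key
  simpa only [TreeCompatible, ← LinearMap.comp_assoc, hRJ, LinearMap.id_comp] using this

end Restrict

/-- The direct sum `Φ = φ¹ ⊕_{λ,μ} φ²` on `(D_E¹ ⊕ D_E²) ⊗ (D_V¹ ⊕ D_V²)` is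
tree-compatible if, and only if, both `φ¹` and `φ²` are tree-compatible. -/
theorem directSum_treeCompatible (K : Type*) [Field K] [CharZero K]
    (E₁ E₂ V₁ V₂ : Type*)
    [AddCommGroup E₁] [Module K E₁] [AddCommGroup E₂] [Module K E₂]
    [AddCommGroup V₁] [Module K V₁] [AddCommGroup V₂] [Module K V₂]
    (φ₁ : TensorProduct K E₁ V₁ →ₗ[K] TensorProduct K E₁ V₁)
    (φ₂ : TensorProduct K E₂ V₂ →ₗ[K] TensorProduct K E₂ V₂)
    (lam mu : K)
    (Φ : TensorProduct K (E₁ × E₂) (V₁ × V₂) →ₗ[K] TensorProduct K (E₁ × E₂) (V₁ × V₂))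
    (h11 : Φ ∘ₗ TensorProduct.map (LinearMap.inl K E₁ E₂) (LinearMap.inl K V₁ V₂)
        = TensorProduct.map (LinearMap.inl K E₁ E₂) (LinearMap.inl K V₁ V₂) ∘ₗ φ₁)
    (h22 : Φ ∘ₗ TensorProduct.map (LinearMap.inr K E₁ E₂) (LinearMap.inr K V₁ V₂)
        = TensorProduct.map (LinearMap.inr K E₁ E₂) (LinearMap.inr K V₁ V₂) ∘ₗ φ₂)
    (h12 : Φ ∘ₗ TensorProduct.map (LinearMap.inl K E₁ E₂) (LinearMap.inr K V₁ V₂)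
        = lam • TensorProduct.map (LinearMap.inl K E₁ E₂) (LinearMap.inr K V₁ V₂))
    (h21 : Φ ∘ₗ TensorProduct.map (LinearMap.inr K E₁ E₂) (LinearMap.inl K V₁ V₂)
        = mu • TensorProduct.map (LinearMap.inr K E₁ E₂) (LinearMap.inl K V₁ V₂)) :
    TreeCompatible K (E₁ × E₂) (V₁ × V₂) Φ ↔
      TreeCompatible K E₁ V₁ φ₁ ∧ TreeCompatible K E₂ V₂ φ₂ := by
  constructor
  · intro H
    constructor
    · exact restrict Φ (LinearMap.inl K E₁ E₂) (LinearMap.inl K V₁ V₂)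
        (LinearMap.fst K E₁ E₂) (LinearMap.fst K V₁ V₂)
        (LinearMap.fst_comp_inl K E₁ E₂) (LinearMap.fst_comp_inl K V₁ V₂) φ₁ h11 H
    · exact restrict Φ (LinearMap.inr K E₁ E₂) (LinearMap.inr K V₁ V₂)
        (LinearMap.snd K E₁ E₂) (LinearMap.snd K V₁ V₂)
        (LinearMap.snd_comp_inr K E₁ E₂) (LinearMap.snd_comp_inr K V₁ V₂) φ₂ h22 H
  · rintro ⟨hφ1, hφ2⟩
    unfold TreeCompatible
    apply glue
    · exact comm_conj _ _ _ _ _ (p13_diag Φ _ _ _ φ₁ h11) (lT_diag Φ _ _ _ φ₁ h11) hφ1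
    · exact comm_conj _ _ _ _ _ (p13_scalar Φ _ _ _ lam h12) (lT_scalar Φ _ _ _ lam h12)
        (smul_id_comm lam _)
    · exact comm_conj _ _ _ _ _ (p13_diag Φ _ _ _ φ₁ h11) (lT_scalar Φ _ _ _ mu h21)
        (smul_id_comm mu _).symm
    · exact comm_conj _ _ _ _ _ (p13_scalar Φ _ _ _ lam h12) (lT_diag Φ _ _ _ φ₂ h22)
        (smul_id_comm lam _)
    · exact comm_conj _ _ _ _ _ (p13_scalar Φ _ _ _ mu h21) (lT_diag Φ _ _ _ φ₁ h11)
        (smul_id_comm mu _)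
    · exact comm_conj _ _ _ _ _ (p13_diag Φ _ _ _ φ₂ h22) (lT_scalar Φ _ _ _ lam h12)
        (smul_id_comm lam _).symm
    · exact comm_conj _ _ _ _ _ (p13_scalar Φ _ _ _ mu h21) (lT_scalar Φ _ _ _ mu h21)
        (smul_id_comm mu _)
    · exact comm_conj _ _ _ _ _ (p13_diag Φ _ _ _ φ₂ h22) (lT_diag Φ _ _ _ φ₂ h22) hφ2
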